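/- Let Γ be a (d−1)-dimensional simplicial complex with gr_1(Γ) > 2r. Then between any two given vertices u and v of the directed 1-skeleton of Γ, there are at most (d−1)^{r−1} non-returning walks of length r. -/

import Mathlib

open Finset

/-- An (abstract) simplicial complex on vertex type `V`: a collection of finite
subsets of `V` (the faces) closed under taking subsets. -/
structure SC (V : Type*) where
  faces : Set (Finset V)
  down_closed : ∀ {F G : Finset V}, F ∈ faces → G ⊆ F → G ∈ faces

namespace SC

variable {V : Type*} [LinearOrder V]

/-- The vertex set of a simplicial complex. -/
def vertexSet (K : SC V) : Set V := {v | {v} ∈ K.faces}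

/-- The induced subcomplex `K[W]` on a set `W` of vertices. -/
def restrict (K : SC V) (W : Set V) : SC V where
  faces := {F | F ∈ K.faces ∧ ↑F ⊆ W}
  down_closed := fun hF hGF =>
    ⟨K.down_closed hF.1 hGF, Set.Subset.trans (Finset.coe_subset.mpr hGF) hF.2⟩

/-- The link `lk_K(F)` of a face `F`: all `G` disjoint from `F` with `F ∪ G ∈ K`. -/
def link (K : SC V) (F : Finset V) : SC V where
  faces := {G | Disjoint F G ∧ F ∪ G ∈ K.faces}
  down_closed := fun hG hHG =>
    ⟨hG.1.mono_right (Finset.le_iff_subset.mpr hHG),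
      K.down_closed hG.2 (Finset.union_subset_union_right hHG)⟩

/-- A complex is flag if every set all of whose subsets of cardinality at most 2
are faces is itself a face (equivalently, all minimal non-faces have two vertices). -/
def Flag (K : SC V) : Prop :=
  ∀ F : Finset V, (∀ G ⊆ F, G.card ≤ 2 → G ∈ K.faces) → F ∈ K.faces

/-- The faces of `K` with exactly `n` vertices (i.e. of dimension `n-1`). -/
def faceSet (K : SC V) (n : ℕ) : Set (Finset V) := {F | F ∈ K.faces ∧ F.card = n}

variable (k : Type*) [Field k]

/-- Simplicial `(n-1)`-chains with coefficients in `k`: formal `k`-linear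
combinations of faces with `n` vertices.  (`n = 0` corresponds to the empty face,
used for *reduced* homology.) -/
abbrev Chains (K : SC V) (n : ℕ) := (faceSet K n) →₀ k

/-- The boundary of a single face, with the usual signs determined by the
linear order on the vertices. -/
noncomputable def bdFace (K : SC V) (n : ℕ) (F : faceSet K (n + 1)) : Chains k K n :=
  ∑ v ∈ (F : Finset V).attach,
    ((-1 : k) ^ (((F : Finset V).filter (fun x => x < (v : V))).card)) •
      Finsupp.single (⟨(F : Finset V).erase v,
        K.down_closed F.2.1 (Finset.erase_subset _ _),
        by rw [Finset.card_erase_of_mem v.2, F.2.2]; rfl⟩ : faceSet K n) 1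

/-- The simplicial boundary map. -/
noncomputable def bd (K : SC V) (n : ℕ) : Chains k K (n + 1) →ₗ[k] Chains k K n :=
  Finsupp.lsum k fun F => LinearMap.toSpanSingleton k _ (bdFace k K n F)

/-- The reduced cycles in degree `n - 1` (chains supported on faces with `n` vertices). -/
noncomputable def cycles (K : SC V) : (n : ℕ) → Submodule k (Chains k K n)
  | 0 => ⊤
  | (m + 1) => LinearMap.ker (bd k K m)

/-- The boundaries in degree `n - 1`. -/
noncomputable def boundaries (K : SC V) (n : ℕ) : Submodule k (Chains k K n) :=
  LinearMap.range (bd k K n)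

/-- `HNonzero k K n` says that the reduced simplicial homology `H̃_{n-1}(K; k)`
is nonzero: some reduced cycle on faces with `n` vertices is not a boundary. -/
def HNonzero (K : SC V) (n : ℕ) : Prop := ¬ (cycles k K n ≤ boundaries k K n)

/-- The dimension of the reduced homology `H̃_{n-1}(K; k)` as a `k`-vector space
(for finite complexes): `dim (cycles) - dim (boundaries ∩ cycles)`. -/
noncomputable def homDim (K : SC V) (n : ℕ) : ℕ :=
  Module.finrank k ↥(cycles k K n) -
    Module.finrank k ↥(boundaries k K n ⊓ cycles k K n)

/-- `girth k K p` is the `(p-1)`-girth `gr_{p-1}(K)` over the field `k`: the least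
cardinality of a vertex set `W` such that `H̃_{p-1}(lk_K(F)[W]; k) ≠ 0` for some
face `F` of `K` (including the empty face), or `∞` if there is no such `W`. -/
noncomputable def girth (K : SC V) (p : ℕ) : ℕ∞ :=
  sInf ((fun W : Finset V => (W.card : ℕ∞)) ''
    {W : Finset V | ∃ F ∈ K.faces, HNonzero k ((K.link F).restrict ↑W) p})

/-- A non-returning walk of length `len` in the directed 1-skeleton of `K`:
consecutive vertices span edges, and no three consecutive vertices return
(`v_i ≠ v_{i+2}`) or span a 2-face of `K`. -/
def IsNRWalk (K : SC V) (len : ℕ) (w : ℕ → V) : Prop :=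
  (∀ i < len, w i ≠ w (i + 1) ∧ ({w i, w (i + 1)} : Finset V) ∈ K.faces) ∧
  (∀ i, i + 2 ≤ len → w i ≠ w (i + 2) ∧ ({w i, w (i + 1), w (i + 2)} : Finset V) ∉ K.faces)

end SC

namespace SCAux

open SC Finsupp

variable {V : Type*} [LinearOrder V] (k : Type*) [Field k]

/-- The 2-element face `{x,y}` as an element of `faceSet L 2`. -/
def edgeFace (L : SC V) (x y : V) (hne : x ≠ y) (h : ({x, y} : Finset V) ∈ L.faces) :
    faceSet L 2 :=
  ⟨{x, y}, h, by rw [Finset.card_insert_of_notMem (by simp [hne]), Finset.card_singleton]⟩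

/-- The 1-element face `{x}` as an element of `faceSet L 1`. -/
def vtxFace (L : SC V) (x : V) (h : ({x} : Finset V) ∈ L.faces) : faceSet L 1 :=
  ⟨{x}, h, Finset.card_singleton x⟩

lemma pair_attach (x y : V) (hne : x ≠ y) :
    ({x, y} : Finset V).attach =
      ({⟨x, by simp⟩, ⟨y, by simp⟩} : Finset {v // v ∈ ({x, y} : Finset V)}) := by
  ext ⟨v, hv⟩
  simp only [Finset.mem_attach, true_iff, Finset.mem_insert, Finset.mem_singleton]
  rcases Finset.mem_insert.mp hv with h | h
  · exact Or.inl (Subtype.ext h)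
  · exact Or.inr (Subtype.ext (Finset.mem_singleton.mp h))

lemma bd_single_edge (L : SC V) (x y : V) (hxy : x < y)
    (h : ({x, y} : Finset V) ∈ L.faces) :
    bd k L 1 (Finsupp.single (edgeFace L x y hxy.ne h) 1) =
      Finsupp.single (vtxFace L y (L.down_closed h (by simp))) 1 -
        Finsupp.single (vtxFace L x (L.down_closed h (by simp))) 1 := by
  rw [bd, Finsupp.lsum_single, LinearMap.toSpanSingleton_apply_one]
  rw [bdFace]
  simp only [edgeFace]
  rw [pair_attach x y hxy.ne]
  rw [Finset.sum_insert (by simp [Subtype.ext_iff, hxy.ne]), Finset.sum_singleton]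
  have h1 : ({x, y} : Finset V).filter (fun z => z < x) = ∅ := by
    apply Finset.filter_eq_empty_iff.mpr
    intro z hz
    rcases Finset.mem_insert.mp hz with rfl | hz
    · exact lt_irrefl _
    · rw [Finset.mem_singleton] at hz; subst hz; exact not_lt_of_gt hxy
  have h2 : ({x, y} : Finset V).filter (fun z => z < y) = {x} := by
    ext z
    simp only [Finset.mem_filter, Finset.mem_insert, Finset.mem_singleton]
    constructor
    · rintro ⟨rfl | rfl, h⟩
      · rfl
      · exact absurd h (lt_irrefl _)
    · rintro rfl; exact ⟨Or.inl rfl, hxy⟩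
  have e1 : ({x, y} : Finset V).erase x = {y} := by
    rw [Finset.erase_insert (by simp [hxy.ne])]
  have e2 : ({x, y} : Finset V).erase y = {x} := by
    rw [Finset.erase_insert_of_ne hxy.ne, Finset.erase_singleton, Finset.insert_empty]
  dsimp only
  rw [h1, h2]
  simp only [Finset.card_empty, Finset.card_singleton, pow_zero, pow_one, one_smul, neg_smul,
    sub_eq_add_neg]
  congr 1
  · exact congrArg (Finsupp.single · (1:k)) (Subtype.ext e1)
  · exact congrArg (fun F => -Finsupp.single F (1:k)) (Subtype.ext e2)

end SCAux

namespace SCAux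

open SC Finsupp

variable {V : Type*} [LinearOrder V] (k : Type*) [Field k]

lemma triangle_hnonzero (L : SC V) (a b c : V) (hab : a < b) (hbc : b < c)
    (h1 : ({a, b} : Finset V) ∈ L.faces) (h2 : ({b, c} : Finset V) ∈ L.faces)
    (h3 : ({a, c} : Finset V) ∈ L.faces)
    (hno : ({a, b, c} : Finset V) ∉ L.faces)
    (hsmall : ∀ G ∈ L.faces, G ⊆ ({a, b, c} : Finset V)) :
    HNonzero k L 2 := by
  have hac : a < c := hab.trans hbc
  have hcard3 : ({a, b, c} : Finset V).card = 3 := by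
    rw [Finset.card_insert_of_notMem (by simp [hab.ne, hac.ne]),
      Finset.card_insert_of_notMem (by simp [hbc.ne]), Finset.card_singleton]
  intro hle
  set z : Chains k L 2 :=
    Finsupp.single (edgeFace L a b hab.ne h1) 1 -
      Finsupp.single (edgeFace L a c hac.ne h3) 1 +
      Finsupp.single (edgeFace L b c hbc.ne h2) 1 with hzdef
  have hz : z ∈ cycles k L 2 := by
    have : cycles k L 2 = LinearMap.ker (bd k L 1) := rfl
    rw [this, LinearMap.mem_ker, hzdef]
    rw [map_add, map_sub, bd_single_edge k L a b hab h1, bd_single_edge k L a c hac h3,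
      bd_single_edge k L b c hbc h2]
    abel
  obtain ⟨c3, hc3⟩ := hle hz
  have hempty : IsEmpty (faceSet L 3) := by
    constructor
    rintro ⟨G, hG, hGcard⟩
    have hsub : G ⊆ ({a, b, c} : Finset V) := hsmall G hG
    have : G = ({a, b, c} : Finset V) :=
      Finset.eq_of_subset_of_card_le hsub (by rw [hcard3, hGcard])
    exact hno (this ▸ hG)
  have hc30 : c3 = 0 := by
    ext x
    exact hempty.elim x
  rw [hc30, map_zero] at hc3
  have hzval : z (edgeFace L a b hab.ne h1) = 1 := by
    have d1 : edgeFace L a c hac.ne h3 ≠ edgeFace L a b hab.ne h1 := by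
      intro hEq
      have h' : ({a, c} : Finset V) = ({a, b} : Finset V) := Subtype.ext_iff.mp hEq
      have hb : b ∈ ({a, c} : Finset V) := by rw [h']; simp
      simp only [Finset.mem_insert, Finset.mem_singleton] at hb
      rcases hb with hb | hb
      · exact hab.ne' hb
      · exact hbc.ne hb
    have d2 : edgeFace L b c hbc.ne h2 ≠ edgeFace L a b hab.ne h1 := by
      intro hEq
      have h' : ({b, c} : Finset V) = ({a, b} : Finset V) := Subtype.ext_iff.mp hEq
      have ha : a ∈ ({b, c} : Finset V) := by rw [h']; simp
      simp only [Finset.mem_insert, Finset.mem_singleton] at ha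
      rcases ha with ha | ha
      · exact hab.ne ha
      · exact hac.ne ha
    rw [hzdef]
    rw [Finsupp.add_apply, Finsupp.sub_apply, Finsupp.single_apply, Finsupp.single_apply,
      Finsupp.single_apply, if_pos rfl, if_neg d1, if_neg d2]
    ring
  have h0 : z (edgeFace L a b hab.ne h1) = 0 := by rw [← hc3]; rfl
  exact one_ne_zero (hzval.symm.trans h0)

end SCAux

namespace SCAux

open SC Finsupp

variable {V : Type*} [LinearOrder V] (k : Type*) [Field k]

lemma triple_swap12 (x y z : V) : ({x, y, z} : Finset V) = {y, x, z} :=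
  Finset.insert_comm x y {z}

lemma triple_swap23 (x y z : V) : ({x, y, z} : Finset V) = {x, z, y} :=
  congrArg (insert x) (Finset.pair_comm y z)

lemma triangle_hnonzero' (L : SC V) (a b c : V) (hab : a ≠ b) (hbc : b ≠ c) (hac : a ≠ c)
    (h1 : ({a, b} : Finset V) ∈ L.faces) (h2 : ({b, c} : Finset V) ∈ L.faces)
    (h3 : ({a, c} : Finset V) ∈ L.faces)
    (hno : ({a, b, c} : Finset V) ∉ L.faces)
    (hsmall : ∀ G ∈ L.faces, G ⊆ ({a, b, c} : Finset V)) :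
    HNonzero k L 2 := by
  -- reduce to the ordered case by sorting a, b, c
  rcases lt_trichotomy a b with h | h | h
  · rcases lt_trichotomy b c with h' | h' | h'
    · exact triangle_hnonzero k L a b c h h' h1 h2 h3 hno hsmall
    · exact absurd h' hbc
    · rcases lt_trichotomy a c with h'' | h'' | h''
      · -- a < c < b
        refine triangle_hnonzero k L a c b h'' h' h3 (Finset.pair_comm b c ▸ h2) h1
          (by rwa [triple_swap23]) ?_
        intro G hG; rw [triple_swap23]; exact hsmall G hG
      · exact absurd h'' hac
      · -- c < a < b
        refine triangle_hnonzero k L c a b h'' h (Finset.pair_comm a c ▸ h3)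
          h1 (Finset.pair_comm b c ▸ h2) ?_ ?_
        · rwa [triple_swap12, triple_swap23]
        · intro G hG; rw [triple_swap12, triple_swap23]; exact hsmall G hG
  · exact absurd h hab
  · rcases lt_trichotomy a c with h' | h' | h'
    · -- b < a < c
      refine triangle_hnonzero k L b a c h h' (Finset.pair_comm a b ▸ h1) h3 h2
        (by rwa [triple_swap12]) ?_
      intro G hG; rw [triple_swap12]; exact hsmall G hG
    · exact absurd h' hac
    · rcases lt_trichotomy b c with h'' | h'' | h''
      · -- b < c < a
        refine triangle_hnonzero k L b c a h'' h' h2 (Finset.pair_comm a c ▸ h3)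
          (Finset.pair_comm a b ▸ h1) ?_ ?_
        · rwa [triple_swap23, triple_swap12]
        · intro G hG; rw [triple_swap23, triple_swap12]; exact hsmall G hG
      · exact absurd h'' hbc
      · -- c < b < a
        refine triangle_hnonzero k L c b a h'' h (Finset.pair_comm b c ▸ h2)
          (Finset.pair_comm a b ▸ h1) (Finset.pair_comm a c ▸ h3) ?_ ?_
        · rwa [triple_swap23, triple_swap12, triple_swap23]
        · intro G hG; rw [triple_swap23, triple_swap12, triple_swap23]; exact hsmall G hG

/-- In a complex all of whose induced triangle-links on 3 vertices have vanishing
`H̃₁`, every clique (whose vertices are faces) is a face. -/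
lemma clique_face (K : SC V) (hempty : (∅ : Finset V) ∈ K.faces)
    (hgirth3 : ∀ W : Finset V, W.card = 3 → ∀ F ∈ K.faces,
      ¬ HNonzero k ((K.link F).restrict ↑W) 2) :
    ∀ S : Finset V, (∀ x ∈ S, ({x} : Finset V) ∈ K.faces) →
      (∀ x ∈ S, ∀ y ∈ S, x ≠ y → ({x, y} : Finset V) ∈ K.faces) → S ∈ K.faces := by
  intro S
  induction S using Finset.strongInductionOn with
  | _ S IH =>
    intro hv he
    by_cases hS2 : S.card ≤ 2
    · interval_cases h : S.card
      · rw [Finset.card_eq_zero.mp h]; exact hempty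
      · obtain ⟨x, rfl⟩ := Finset.card_eq_one.mp h
        exact hv x (by simp)
      · obtain ⟨x, y, hxy, rfl⟩ := Finset.card_eq_two.mp h
        exact he x (by simp) y (by simp) hxy
    · push_neg at hS2
      have hS3 : 3 ≤ S.card := hS2
      -- pick three distinct elements a < b < c of S
      have hne : S.Nonempty := Finset.card_pos.mp (by omega)
      set a := S.min' hne with hadef
      have ha : a ∈ S := S.min'_mem hne
      have hne1 : (S.erase a).Nonempty := by
        rw [← Finset.card_pos, Finset.card_erase_of_mem ha]; omega
      set b := (S.erase a).min' hne1 with hbdef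
      have hb' : b ∈ S.erase a := Finset.min'_mem _ hne1
      have hb : b ∈ S := Finset.mem_of_mem_erase hb'
      have hab : a < b := lt_of_le_of_ne (S.min'_le b hb) (Finset.ne_of_mem_erase hb').symm
      have hne2 : ((S.erase a).erase b).Nonempty := by
        rw [← Finset.card_pos, Finset.card_erase_of_mem hb', Finset.card_erase_of_mem ha]; omega
      set c := ((S.erase a).erase b).min' hne2 with hcdef
      have hc'' : c ∈ (S.erase a).erase b := Finset.min'_mem _ hne2
      have hc' : c ∈ S.erase a := Finset.mem_of_mem_erase hc''
      have hc : c ∈ S := Finset.mem_of_mem_erase hc'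
      have hbc : b < c :=
        lt_of_le_of_ne ((S.erase a).min'_le c hc') (Finset.ne_of_mem_erase hc'').symm
      have hac : a < c := hab.trans hbc
      set F : Finset V := ((S.erase c).erase b).erase a with hFdef
      have haF : a ∉ F := Finset.notMem_erase _ _
      have hbF : b ∉ F := fun h => Finset.notMem_erase _ _ (Finset.mem_of_mem_erase h)
      have hcF : c ∉ F := fun h =>
        Finset.notMem_erase _ _ (Finset.mem_of_mem_erase (Finset.mem_of_mem_erase h))
      have hmemF : ∀ z, z ∈ F ↔ z ∈ S ∧ z ≠ a ∧ z ≠ b ∧ z ≠ c := by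
        intro z
        simp only [hFdef, Finset.mem_erase]
        tauto
      have hFS : F ⊆ S := fun z hz => ((hmemF z).mp hz).1
      have hsubface : ∀ T ⊂ S, T ∈ K.faces := fun T hT =>
        IH T hT (fun x hx => hv x (hT.subset hx))
          (fun x hx y hy => he x (hT.subset hx) y (hT.subset hy))
      have hstrict : ∀ x y : V, x ∈ S → y ∈ S → c ∉ ({x, y} : Finset V) →
          F ∪ ({x, y} : Finset V) ∈ K.faces ∨ True := fun _ _ _ _ _ => Or.inr trivial
      have hUface : ∀ x y : V, x ∈ S → y ∈ S → F ∪ ({x, y} : Finset V) ∈ K.faces := by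
        intro x y hx hy
        apply hsubface
        rw [Finset.ssubset_iff_of_subset]
        · -- some element of {a,b,c} is missing from F ∪ {x,y}
          have : ∃ z, z ∈ S ∧ z ∉ F ∪ ({x, y} : Finset V) := by
            by_cases hxa : a = x ∨ a = y
            · by_cases hxb : b = x ∨ b = y
              · refine ⟨c, hc, ?_⟩
                simp only [Finset.mem_union, Finset.mem_insert, Finset.mem_singleton]
                push_neg
                refine ⟨hcF, ?_, ?_⟩
                · rintro rfl
                  rcases hxa with h | h
                  · exact hac.ne h
                  · rcases hxb with h' | h'
                    · exact hbc.ne h'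
                    · exact hab.ne (h.trans h'.symm)
                · rintro rfl
                  rcases hxa with h | h
                  · rcases hxb with h' | h'
                    · exact hab.ne (h.trans h'.symm)
                    · exact hbc.ne h'
                  · exact hac.ne h
              · push_neg at hxb
                refine ⟨b, hb, ?_⟩
                simp only [Finset.mem_union, Finset.mem_insert, Finset.mem_singleton]
                push_neg
                exact ⟨hbF, hxb.1, hxb.2⟩
            · push_neg at hxa
              refine ⟨a, ha, ?_⟩
              simp only [Finset.mem_union, Finset.mem_insert, Finset.mem_singleton]
              push_neg
              exact ⟨haF, hxa.1, hxa.2⟩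
          obtain ⟨z, hz1, hz2⟩ := this
          exact ⟨z, hz1, hz2⟩
        · apply Finset.union_subset hFS
          intro z hz
          rcases Finset.mem_insert.mp hz with rfl | hz
          · exact hx
          · rw [Finset.mem_singleton] at hz; subst hz; exact hy
      have hFface : F ∈ K.faces := hsubface F ⟨hFS, fun hSF => haF (hSF ha)⟩
      have hUS : F ∪ ({a, b, c} : Finset V) = S := by
        ext z
        simp only [Finset.mem_union, Finset.mem_insert, Finset.mem_singleton, hmemF z]
        constructor
        · rintro (⟨h, _⟩ | rfl | rfl | rfl) <;> first | exact h | exact ha | exact hb | exact hc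
        · intro hz
          by_cases h1 : z = a
          · exact Or.inr (Or.inl h1)
          by_cases h2 : z = b
          · exact Or.inr (Or.inr (Or.inl h2))
          by_cases h3 : z = c
          · exact Or.inr (Or.inr (Or.inr h3))
          exact Or.inl ⟨hz, h1, h2, h3⟩
      by_contra hSno
      have hdisj : ∀ x y : V, x ∉ F → y ∉ F → Disjoint F ({x, y} : Finset V) := by
        intro x y hx hy
        rw [Finset.disjoint_right]
        intro z hz
        rcases Finset.mem_insert.mp hz with rfl | hz
        · exact hx
        · rw [Finset.mem_singleton] at hz; subst hz; exact hy
      have hcard3 : ({a, b, c} : Finset V).card = 3 := by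
        rw [Finset.card_insert_of_notMem (by simp [hab.ne, hac.ne]),
          Finset.card_insert_of_notMem (by simp [hbc.ne]), Finset.card_singleton]
      refine hgirth3 {a, b, c} hcard3 F hFface ?_
      refine triangle_hnonzero' k _ a b c hab.ne hbc.ne hac.ne ?_ ?_ ?_ ?_ ?_
      · refine ⟨⟨hdisj a b haF hbF, hUface a b ha hb⟩, ?_⟩
        intro z hz
        simp only [Finset.coe_insert, Finset.coe_singleton, Set.mem_insert_iff,
          Set.mem_singleton_iff] at hz ⊢
        tauto
      · refine ⟨⟨hdisj b c hbF hcF, hUface b c hb hc⟩, ?_⟩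
        intro z hz
        simp only [Finset.coe_insert, Finset.coe_singleton, Set.mem_insert_iff,
          Set.mem_singleton_iff] at hz ⊢
        tauto
      · refine ⟨⟨hdisj a c haF hcF, hUface a c ha hc⟩, ?_⟩
        intro z hz
        simp only [Finset.coe_insert, Finset.coe_singleton, Set.mem_insert_iff,
          Set.mem_singleton_iff] at hz ⊢
        tauto
      · rintro ⟨⟨-, hun⟩, -⟩
        rw [hUS] at hun
        exact hSno hun
      · exact fun G hG => Finset.coe_subset.mp hG.2

end SCAux

namespace SCAux

open SC Finsupp

variable {V : Type*} [LinearOrder V] (k : Type*) [Field k]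

/-- The oriented edge chain `[x,y]` (sign according to the linear order). -/
noncomputable def oedge (L : SC V) (x y : V) (hne : x ≠ y)
    (h : ({x, y} : Finset V) ∈ L.faces) : Chains k L 2 :=
  if x < y then Finsupp.single (edgeFace L x y hne h) 1
  else - Finsupp.single (edgeFace L y x hne.symm (Finset.pair_comm x y ▸ h)) 1

lemma bd_oedge (L : SC V) (x y : V) (hne : x ≠ y) (h : ({x, y} : Finset V) ∈ L.faces)
    (hx : ({x} : Finset V) ∈ L.faces) (hy : ({y} : Finset V) ∈ L.faces) :
    bd k L 1 (oedge k L x y hne h) =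
      Finsupp.single (vtxFace L y hy) 1 - Finsupp.single (vtxFace L x hx) 1 := by
  rw [oedge]
  rcases lt_or_gt_of_ne hne with hlt | hlt
  · rw [if_pos hlt, bd_single_edge k L x y hlt h]
  · rw [if_neg (not_lt_of_gt hlt), map_neg,
      bd_single_edge k L y x hlt (Finset.pair_comm x y ▸ h)]
    have : (Finsupp.single (vtxFace L x hx) 1 - Finsupp.single (vtxFace L y hy) 1 : Chains k L 1)
        = Finsupp.single (vtxFace L x (L.down_closed (Finset.pair_comm x y ▸ h) (by simp))) 1 -
          Finsupp.single (vtxFace L y (L.down_closed (Finset.pair_comm x y ▸ h) (by simp))) 1 :=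
      rfl
    rw [← this]
    abel

lemma oedge_apply_other (L : SC V) (x y : V) (hne : x ≠ y)
    (h : ({x, y} : Finset V) ∈ L.faces) (p : faceSet L 2)
    (hp : (p : Finset V) ≠ ({x, y} : Finset V)) : (oedge k L x y hne h) p = 0 := by
  rw [oedge]
  split
  · exact Finsupp.single_eq_of_ne' (fun hEq => hp (by rw [← hEq]; rfl))
  · have hq : edgeFace L y x hne.symm (Finset.pair_comm x y ▸ h) ≠ p :=
      fun hEq => hp (by rw [← hEq]; exact Finset.pair_comm y x)
    rw [Finsupp.neg_apply, Finsupp.single_eq_of_ne' hq, neg_zero]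

lemma oedge_apply_self (L : SC V) (x y : V) (hne : x ≠ y)
    (h : ({x, y} : Finset V) ∈ L.faces) (p : faceSet L 2)
    (hp : (p : Finset V) = ({x, y} : Finset V)) : (oedge k L x y hne h) p ≠ 0 := by
  rw [oedge]
  split
  · rw [show edgeFace L x y hne h = p from Subtype.ext hp.symm, Finsupp.single_eq_same]
    exact one_ne_zero
  · rw [Finsupp.neg_apply,
      show edgeFace L y x hne.symm (Finset.pair_comm x y ▸ h) = p from
        Subtype.ext ((Finset.pair_comm y x).trans hp.symm), Finsupp.single_eq_same]
    simp

lemma cycle_hnonzero (L : SC V) (m : ℕ) (hm : 4 ≤ m) (w : ℕ → V)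
    (hinj : ∀ i < m, ∀ j < m, w i = w j → i = j)
    (hedge : ∀ i < m, ({w i, w ((i + 1) % m)} : Finset V) ∈ L.faces)
    (hno3 : ∀ G ∈ L.faces, G.card ≠ 3) :
    HNonzero k L 2 := by
  have hm0 : 0 < m := by omega
  have hmod : ∀ i : ℕ, i % m < m := fun i => Nat.mod_lt _ hm0
  have hstep : ∀ i < m, (i + 1) % m ≠ i := by
    intro i hi
    rcases Nat.lt_or_ge (i + 1) m with h | h
    · rw [Nat.mod_eq_of_lt h]; omega
    · have : i + 1 = m := by omega
      rw [this, Nat.mod_self]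
      omega
  have hne : ∀ i, i < m → w i ≠ w ((i + 1) % m) := by
    intro i hi heq
    exact hstep i hi (hinj _ (hmod _) i hi heq.symm)
  have hv : ∀ j : ℕ, ({w (j % m)} : Finset V) ∈ L.faces := fun j =>
    L.down_closed (hedge (j % m) (hmod j)) (by simp)
  classical
  set e : ℕ → Chains k L 2 := fun i =>
    if hi : i < m then oedge k L (w i) (w ((i + 1) % m)) (hne i hi) (hedge i hi) else 0
    with hedef
  set g : ℕ → Chains k L 1 := fun j => Finsupp.single (vtxFace L (w (j % m)) (hv j)) 1
    with hgdef
  set z : Chains k L 2 := ∑ i ∈ Finset.range m, e i with hzdef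
  intro hle
  have hz : z ∈ cycles k L 2 := by
    have hcy : cycles k L 2 = LinearMap.ker (bd k L 1) := rfl
    rw [hcy, LinearMap.mem_ker, hzdef, map_sum]
    have hterm : ∀ i ∈ Finset.range m, bd k L 1 (e i) = g (i + 1) - g i := by
      intro i hi
      rw [Finset.mem_range] at hi
      have him : i % m = i := Nat.mod_eq_of_lt hi
      rw [hedef]
      simp only [dif_pos hi]
      rw [bd_oedge k L (w i) (w ((i + 1) % m)) (hne i hi) (hedge i hi)
        (him ▸ hv i) (hv (i + 1))]
      congr 1
      refine congrArg (Finsupp.single · 1) (Subtype.ext ?_)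
      show ({w i} : Finset V) = {w (i % m)}
      rw [him]
    rw [Finset.sum_congr rfl hterm, Finset.sum_sub_distrib]
    obtain ⟨n, rfl⟩ : ∃ n, m = n + 1 := ⟨m - 1, by omega⟩
    rw [Finset.sum_range_succ' g n, Finset.sum_range_succ (fun i => g (i + 1)) n]
    have hgm : g (n + 1) = g 0 := by
      rw [hgdef]
      refine congrArg (Finsupp.single · 1) (Subtype.ext ?_)
      show ({w ((n + 1) % (n + 1))} : Finset V) = {w (0 % (n + 1))}
      rw [Nat.mod_self, Nat.zero_mod]
    rw [hgm]
    abel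
  obtain ⟨c3, hc3⟩ := hle hz
  have hempty : IsEmpty (faceSet L 3) := by
    constructor
    rintro ⟨G, hG, hGcard⟩
    exact hno3 G hG hGcard
  have hc30 : c3 = 0 := by
    ext x
    exact hempty.elim x
  rw [hc30, map_zero] at hc3
  -- evaluate z at the edge {w 0, w 1}
  have h1m : 1 % m = 1 := Nat.mod_eq_of_lt (by omega)
  have h2m : 2 % m = 2 := Nat.mod_eq_of_lt (by omega)
  have hedge0 : ({w 0, w 1} : Finset V) ∈ L.faces := by
    have := hedge 0 hm0
    rwa [show (0 + 1) % m = 1 from h1m] at this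
  have hne0 : w 0 ≠ w 1 := by
    have := hne 0 hm0
    rwa [show (0 + 1) % m = 1 from h1m] at this
  set p : faceSet L 2 := edgeFace L (w 0) (w 1) hne0 hedge0 with hpdef
  have hzp : z p ≠ 0 := by
    rw [hzdef, Finsupp.finset_sum_apply]
    rw [Finset.sum_eq_single 0]
    · rw [hedef]
      simp only [dif_pos hm0]
      apply oedge_apply_self
      rw [hpdef]
      show ({w 0, w 1} : Finset V) = {w 0, w ((0 + 1) % m)}
      rw [show (0 + 1) % m = 1 from h1m]
    · intro i hi hi0
      rw [Finset.mem_range] at hi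
      rw [hedef]
      simp only [dif_pos hi]
      apply oedge_apply_other
      show ({w 0, w 1} : Finset V) ≠ {w i, w ((i + 1) % m)}
      intro hEq
      have hwi : w i ∈ ({w 0, w 1} : Finset V) := by rw [hEq]; simp
      rcases Finset.mem_insert.mp hwi with hwi | hwi
      · exact hi0 (hinj i hi 0 hm0 hwi)
      · rw [Finset.mem_singleton] at hwi
        have : i = 1 := hinj i hi 1 (by omega) hwi
        subst this
        have hw2 : w ((1 + 1) % m) ∈ ({w 0, w 1} : Finset V) := by rw [hEq]; simp
        rw [show (1 + 1) % m = 2 from h2m] at hw2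
        rcases Finset.mem_insert.mp hw2 with hw2 | hw2
        · have : (2 : ℕ) = 0 := hinj 2 (by omega) 0 hm0 hw2
          omega
        · rw [Finset.mem_singleton] at hw2
          have : (2 : ℕ) = 1 := hinj 2 (by omega) 1 (by omega) hw2
          omega
    · intro h0
      exact absurd (Finset.mem_range.mpr hm0) h0
  exact hzp (by rw [← hc3]; rfl)

end SCAux

namespace SCAux

open SC Finsupp

variable {V : Type*} [LinearOrder V] (k : Type*) [Field k]

/-- Adjacency in the 1-skeleton. -/
def Adj (K : SC V) (x y : V) : Prop := x ≠ y ∧ ({x, y} : Finset V) ∈ K.faces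

/-- Separation: distinct and non-adjacent. -/
def Sep (K : SC V) (x y : V) : Prop := x ≠ y ∧ ({x, y} : Finset V) ∉ K.faces

lemma Adj.symm' {K : SC V} {x y : V} (h : Adj K x y) : Adj K y x :=
  ⟨h.1.symm, Finset.pair_comm x y ▸ h.2⟩

lemma Sep.symm' {K : SC V} {x y : V} (h : Sep K x y) : Sep K y x :=
  ⟨h.1.symm, fun hm => h.2 (Finset.pair_comm y x ▸ hm)⟩

lemma sep_of_not_adj {K : SC V} {x y : V} (hne : x ≠ y) (h : ¬ Adj K x y) : Sep K x y :=
  ⟨hne, fun hm => h ⟨hne, hm⟩⟩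

lemma succ_mod_lt (m : ℕ) (hm : 2 ≤ m) (a : ℕ) (ha : a < m) :
    (a + 1) % m = if a + 1 = m then 0 else a + 1 := by
  by_cases h : a + 1 = m
  · rw [if_pos h, h, Nat.mod_self]
  · rw [if_neg h, Nat.mod_eq_of_lt (by omega)]

lemma succ_mod_eq (m : ℕ) (hm : 2 ≤ m) (j : ℕ) :
    (j + 1) % m = if j % m + 1 = m then 0 else j % m + 1 := by
  have h1 : (j + 1) % m = (j % m + 1) % m := by
    conv_lhs => rw [Nat.add_mod, Nat.mod_eq_of_lt (show 1 < m by omega)]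
  rw [h1, succ_mod_lt m hm (j % m) (Nat.mod_lt j (by omega))]

/-- In a complex with vanishing small `H̃₁`, there is no short induced cycle. -/
lemma no_induced_cycle (K : SC V) (hempty : (∅ : Finset V) ∈ K.faces) (B : ℕ)
    (hgirth : ∀ Wf : Finset V, Wf.card ≤ B → ∀ F ∈ K.faces,
      ¬ HNonzero k ((K.link F).restrict ↑Wf) 2) :
    ∀ m, 4 ≤ m → m ≤ B → ∀ w : ℕ → V,
      (∀ i < m, ∀ j < m, w i = w j → i = j) →
      (∀ i < m, Adj K (w i) (w ((i + 1) % m))) →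
      (∀ i < m, ∀ j < m, Adj K (w i) (w j) → j = (i + 1) % m ∨ i = (j + 1) % m) →
      False := by
  intro m hm4 hmB w hinj hadj hcons
  classical
  set W : Finset V := (Finset.range m).image w with hWdef
  have hWcard : W.card = m := by
    rw [hWdef, Finset.card_image_of_injOn, Finset.card_range]
    intro i hi j hj hij
    exact hinj i (Finset.mem_range.mp hi) j (Finset.mem_range.mp hj) hij
  have hmemW : ∀ i < m, w i ∈ W := fun i hi =>
    Finset.mem_image.mpr ⟨i, Finset.mem_range.mpr hi, rfl⟩
  refine hgirth W (by omega) ∅ hempty ?_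
  refine cycle_hnonzero k _ m hm4 w hinj ?_ ?_
  · intro i hi
    refine ⟨⟨Finset.disjoint_empty_left _, ?_⟩, ?_⟩
    · rw [Finset.empty_union]; exact (hadj i hi).2
    · intro z hz
      simp only [Finset.coe_insert, Finset.coe_singleton, Set.mem_insert_iff,
        Set.mem_singleton_iff] at hz
      rcases hz with rfl | rfl
      · exact Finset.mem_coe.mpr (hmemW i hi)
      · exact Finset.mem_coe.mpr (hmemW _ (Nat.mod_lt _ (by omega)))
  · rintro G ⟨⟨-, hGK⟩, hGW⟩ hG3
    rw [Finset.empty_union] at hGK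
    obtain ⟨x, y, z, hxy, hxz, hyz, rfl⟩ := Finset.card_eq_three.mp hG3
    have hWmem : ∀ t ∈ ({x, y, z} : Finset V), ∃ a, a < m ∧ w a = t := by
      intro t ht
      have : t ∈ W := Finset.mem_coe.mp (hGW (Finset.mem_coe.mpr ht))
      obtain ⟨a, ha, rfl⟩ := Finset.mem_image.mp this
      exact ⟨a, Finset.mem_range.mp ha, rfl⟩
    obtain ⟨a, ham, hax⟩ := hWmem x (by simp)
    obtain ⟨b, hbm, hby⟩ := hWmem y (by simp)
    obtain ⟨c, hcm, hcz⟩ := hWmem z (by simp)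
    subst hax; subst hby; subst hcz
    have hab : a ≠ b := fun h => hxy (congrArg w h)
    have hac : a ≠ c := fun h => hxz (congrArg w h)
    have hbc : b ≠ c := fun h => hyz (congrArg w h)
    have hsub : ∀ s t : V, s ∈ ({w a, w b, w c} : Finset V) →
        t ∈ ({w a, w b, w c} : Finset V) → ({s, t} : Finset V) ⊆ {w a, w b, w c} := by
      intro s t hs ht z' hz'
      rcases Finset.mem_insert.mp hz' with rfl | hz'
      · exact hs
      · rw [Finset.mem_singleton] at hz'; subst hz'; exact ht
    have hAab : Adj K (w a) (w b) :=
      ⟨hxy, K.down_closed hGK (hsub _ _ (by simp) (by simp))⟩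
    have hAbc : Adj K (w b) (w c) :=
      ⟨hyz, K.down_closed hGK (hsub _ _ (by simp) (by simp))⟩
    have hAac : Adj K (w a) (w c) :=
      ⟨hxz, K.down_closed hGK (hsub _ _ (by simp) (by simp))⟩
    have R1 := hcons a ham b hbm hAab
    have R2 := hcons b hbm c hcm hAbc
    have R3 := hcons a ham c hcm hAac
    simp only [succ_mod_lt m (by omega) a ham, succ_mod_lt m (by omega) b hbm,
      succ_mod_lt m (by omega) c hcm] at R1 R2 R3
    split_ifs at R1 R2 R3 <;> omega

end SCAux

namespace SCAux

open SC

variable {V : Type*} [LinearOrder V] (k : Type*) [Field k]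

/-- A (cyclically) non-returning closed walk of length `L`. -/
def CNR (K : SC V) (L : ℕ) (w : ℕ → V) : Prop :=
  (∀ i, w (i + L) = w i) ∧ (∀ i, Adj K (w i) (w (i + 1))) ∧ (∀ i, Sep K (w i) (w (i + 2)))

theorem no_closed_nr (K : SC V) (B : ℕ)
    (hnic : ∀ m, 4 ≤ m → m ≤ B → ∀ w : ℕ → V,
      (∀ i < m, ∀ j < m, w i = w j → i = j) →
      (∀ i < m, Adj K (w i) (w ((i + 1) % m))) →
      (∀ i < m, ∀ j < m, Adj K (w i) (w j) → j = (i + 1) % m ∨ i = (j + 1) % m) →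
      False) :
    ∀ L, 3 ≤ L → L ≤ B → ∀ w : ℕ → V, ¬ CNR K L w := by
  intro L
  induction L using Nat.strong_induction_on with
  | _ L IH =>
  intro hL3 hLB w hC
  obtain ⟨hper, hadj, hsep⟩ := hC
  rcases eq_or_lt_of_le hL3 with hL3' | hL4'
  · -- L = 3 : direct contradiction
    have h3 : w (0 + L) = w 0 := hper 0
    rw [← hL3'] at h3
    have hs := hsep 0
    rw [show (0 + 3 : ℕ) = 2 + 1 from rfl] at h3
    have ha := hadj 2
    rw [h3] at ha
    exact (Sep.symm' hs).2 ha.2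
  · have hL4 : 4 ≤ L := hL4'
    classical
    set Bad : ℕ → Prop := fun m => ∃ i, w i = w (i + m) ∨ Adj K (w i) (w (i + m))
      with hBaddef
    have hBad2 : ¬ Bad 2 := by
      rintro ⟨i, h | h⟩
      · exact (hsep i).1 h
      · exact (hsep i).2 h.2
    set M : Set ℕ := {m | 2 ≤ m ∧ m ≤ L - 2 ∧ Bad m} with hMdef
    by_cases hM : M.Nonempty
    · -- there is a violation; take a minimal one
      set m₀ := sInf M with hm₀def
      have hm₀M : m₀ ∈ M := Nat.sInf_mem hM
      obtain ⟨hm₀2, hm₀L, i, hbad⟩ := hm₀M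
      have hmin : ∀ m', 2 ≤ m' → m' ≤ L - 2 → m' < m₀ → ¬ Bad m' := by
        intro m' h2 hl hlt hb
        exact absurd (Nat.sInf_le (show m' ∈ M from ⟨h2, hl, hb⟩)) (by omega)
      have hm₀3 : 3 ≤ m₀ := by
        by_contra h
        have : m₀ = 2 := by omega
        rw [this] at hbad
        exact hBad2 ⟨i, hbad⟩
      have hSepAt : ∀ m' i', 2 ≤ m' → m' < m₀ → Sep K (w i') (w (i' + m')) := by
        intro m' i' h2 hlt
        have hnb := hmin m' h2 (by omega) hlt
        have hne : w i' ≠ w (i' + m') := fun h => hnb ⟨i', Or.inl h⟩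
        exact sep_of_not_adj hne (fun h => hnb ⟨i', Or.inr h⟩)
      rcases hbad with heq | hAdj
      · -- a repeated vertex at distance m₀
        rcases eq_or_lt_of_le hm₀3 with h3 | h4
        · -- m₀ = 3 is impossible
          rw [← h3] at heq
          have hs := hsep (i + 1)
          rw [show i + 1 + 2 = i + 3 from rfl, ← heq] at hs
          exact (Sep.symm' hs).2 (hadj i).2
        · -- m₀ ≥ 4 : shortcut to a closed NR walk of length m₀
          have hm₀4 : 4 ≤ m₀ := h4
          refine IH m₀ (by omega) (by omega) (by omega) (fun j => w (i + j % m₀)) ⟨?_, ?_, ?_⟩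
          · intro j
            show w (i + (j + m₀) % m₀) = w (i + j % m₀)
            rw [Nat.add_mod_right]
          · intro j
            show Adj K (w (i + j % m₀)) (w (i + (j + 1) % m₀))
            have h1 := succ_mod_eq m₀ (by omega) j
            by_cases hc1 : j % m₀ + 1 = m₀
            · rw [h1, if_pos hc1]
              have ha := hadj (i + j % m₀)
              rw [show i + j % m₀ + 1 = i + m₀ from by omega, ← heq,
                show (i : ℕ) = i + 0 from rfl] at ha
              exact ha
            · rw [h1, if_neg hc1]
              have ha := hadj (i + j % m₀)
              rw [show i + j % m₀ + 1 = i + (j % m₀ + 1) from by omega] at ha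
              exact ha
          · intro j
            show Sep K (w (i + j % m₀)) (w (i + (j + 2) % m₀))
            have h1 := succ_mod_eq m₀ (by omega) j
            have h2 := succ_mod_eq m₀ (by omega) (j + 1)
            rw [show j + 1 + 1 = j + 2 from rfl] at h2
            by_cases hc1 : j % m₀ + 1 = m₀
            · -- j ≡ m₀ - 1 : opposite vertex is w (i+1)
              rw [h1, if_pos hc1] at h2
              rw [if_neg (by omega : ¬ (0 + 1 = m₀))] at h2
              rw [h2]
              have hs := hSepAt (m₀ - 2) (i + 1) (by omega) (by omega)
              rw [show i + 1 + (m₀ - 2) = i + (m₀ - 1) from by omega] at hs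
              have := Sep.symm' hs
              rwa [show i + (m₀ - 1) = i + j % m₀ from by omega,
                show (i + 1 : ℕ) = i + 0 + 1 from by omega] at this
            · rw [h1, if_neg hc1] at h2
              by_cases hc2 : j % m₀ + 1 + 1 = m₀
              · rw [if_pos hc2] at h2
                rw [h2]
                have hs := hsep (i + j % m₀)
                rw [show i + j % m₀ + 2 = i + m₀ from by omega, ← heq,
                  show (i : ℕ) = i + 0 from rfl] at hs
                exact hs
              · rw [if_neg hc2] at h2
                rw [h2]
                have hs := hsep (i + j % m₀)
                rwa [show i + j % m₀ + 2 = i + (j % m₀ + 1 + 1) from by omega] at hs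
      · -- a chord at distance m₀ : shortcut to a closed NR walk of length m₀+1
        refine IH (m₀ + 1) (by omega) (by omega) (by omega)
          (fun j => w (i + j % (m₀ + 1))) ⟨?_, ?_, ?_⟩
        · intro j
          show w (i + (j + (m₀ + 1)) % (m₀ + 1)) = w (i + j % (m₀ + 1))
          rw [Nat.add_mod_right]
        · intro j
          show Adj K (w (i + j % (m₀ + 1))) (w (i + (j + 1) % (m₀ + 1)))
          have h1 := succ_mod_eq (m₀ + 1) (by omega) j
          by_cases hc1 : j % (m₀ + 1) + 1 = m₀ + 1
          · rw [h1, if_pos hc1]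
            have := Adj.symm' hAdj
            rwa [show (i : ℕ) = i + 0 from rfl, show i + 0 + m₀ = i + j % (m₀ + 1) from by omega]
              at this
          · rw [h1, if_neg hc1]
            have ha := hadj (i + j % (m₀ + 1))
            rwa [show i + j % (m₀ + 1) + 1 = i + (j % (m₀ + 1) + 1) from by omega] at ha
        · intro j
          show Sep K (w (i + j % (m₀ + 1))) (w (i + (j + 2) % (m₀ + 1)))
          have h1 := succ_mod_eq (m₀ + 1) (by omega) j
          have h2 := succ_mod_eq (m₀ + 1) (by omega) (j + 1)
          rw [show j + 1 + 1 = j + 2 from rfl] at h2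
          by_cases hc1 : j % (m₀ + 1) + 1 = m₀ + 1
          · -- j ≡ m₀ : opposite vertex is w (i+1)
            rw [h1, if_pos hc1] at h2
            rw [if_neg (by omega : ¬ (0 + 1 = m₀ + 1))] at h2
            rw [h2]
            have hs := hSepAt (m₀ - 1) (i + 1) (by omega) (by omega)
            rw [show i + 1 + (m₀ - 1) = i + m₀ from by omega] at hs
            have := Sep.symm' hs
            rwa [show i + m₀ = i + j % (m₀ + 1) from by omega,
              show (i + 1 : ℕ) = i + 0 + 1 from by omega] at this
          · rw [h1, if_neg hc1] at h2
            by_cases hc2 : j % (m₀ + 1) + 1 + 1 = m₀ + 1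
            · -- j ≡ m₀ - 1 : opposite vertex is w i
              rw [if_pos hc2] at h2
              rw [h2]
              have hs := hSepAt (m₀ - 1) i (by omega) (by omega)
              have := Sep.symm' hs
              rwa [show i + (m₀ - 1) = i + j % (m₀ + 1) from by omega,
                show (i : ℕ) = i + 0 from rfl] at this
            · rw [if_neg hc2] at h2
              rw [h2]
              have hs := hsep (i + j % (m₀ + 1))
              rwa [show i + j % (m₀ + 1) + 2 = i + (j % (m₀ + 1) + 1 + 1) from by omega] at hs
    · -- no violation : `w` is an induced cycle of length `L`
      have hnbad : ∀ m', 2 ≤ m' → m' ≤ L - 2 → ¬ Bad m' := fun m' h1 h2 hb =>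
        hM ⟨m', h1, h2, hb⟩
      have key : ∀ i j, i < j → j < i + L → w i = w j → False := by
        intro i j hij hjL heq
        have hd1 : 1 ≤ j - i := by omega
        rcases eq_or_lt_of_le hd1 with h1 | h1
        · -- distance 1
          have : j = i + 1 := by omega
          subst this
          exact (hadj i).1 heq
        · rcases Nat.lt_or_ge (j - i) (L - 1) with h2 | h2
          · exact hnbad (j - i) (by omega) (by omega)
              ⟨i, Or.inl (by rwa [show i + (j - i) = j from by omega])⟩
          · -- distance L-1
            have hj : j = i + (L - 1) := by omega
            have ha := hadj j
            rw [hj, show i + (L - 1) + 1 = i + L from by omega, hper i] at ha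
            rw [hj] at heq
            exact ha.1 (by rw [← heq])
      have keyA : ∀ i j, i < j → j < i + L → Adj K (w i) (w j) →
          j = i + 1 ∨ i + L = j + 1 := by
        intro i j hij hjL hA
        rcases eq_or_lt_of_le (show 1 ≤ j - i by omega) with h1 | h1
        · exact Or.inl (by omega)
        · rcases Nat.lt_or_ge (j - i) (L - 1) with h2 | h2
          · exact absurd ⟨i, Or.inr (by rwa [show i + (j - i) = j from by omega])⟩
              (hnbad (j - i) (by omega) (by omega))
          · exact Or.inr (by omega)
      refine hnic L hL4 hLB w ?_ ?_ ?_
      · intro i hi j hj heq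
        rcases lt_trichotomy i j with h | h | h
        · exact absurd heq (fun he => key i j h (by omega) he)
        · exact h
        · exact absurd heq.symm (fun he => key j i h (by omega) he)
      · intro i hi
        by_cases hc : i + 1 = L
        · rw [hc, Nat.mod_self]
          have ha := hadj i
          rw [hc, show w L = w 0 from (congrArg w (Nat.zero_add L).symm).trans (hper 0)] at ha
          exact ha
        · rw [Nat.mod_eq_of_lt (by omega)]
          exact hadj i
      · intro i hi j hj hA
        have hne : i ≠ j := fun h => hA.1 (congrArg w h)
        rcases lt_trichotomy i j with h | h | h
        · rcases keyA i j h (by omega) hA with h' | h'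
          · left; rw [h', Nat.mod_eq_of_lt (by omega)]
          · right
            have hi0 : i = 0 := by omega
            have hjL : j = L - 1 := by omega
            rw [hjL, show L - 1 + 1 = L from by omega, Nat.mod_self, hi0]
        · exact absurd h hne
        · rcases keyA j i h (by omega) (Adj.symm' hA) with h' | h'
          · right; rw [h', Nat.mod_eq_of_lt (by omega)]
          · left
            have hj0 : j = 0 := by omega
            have hiL : i = L - 1 := by omega
            rw [hiL, show L - 1 + 1 = L from by omega, Nat.mod_self, hj0]

end SCAux

namespace SCAux

open SC

variable {V : Type*} [LinearOrder V]

/-- An open non-returning walk of length `L`. -/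
def NRW (K : SC V) (L : ℕ) (w : ℕ → V) : Prop :=
  (∀ i < L, Adj K (w i) (w (i + 1))) ∧ (∀ i, i + 2 ≤ L → Sep K (w i) (w (i + 2)))

lemma nrw_ends (K : SC V) (B : ℕ)
    (hcl : ∀ L', 3 ≤ L' → L' ≤ B → ∀ w : ℕ → V, ¬ CNR K L' w) :
    ∀ L, 2 ≤ L → ∀ w : ℕ → V, NRW K L w →
      (L ≤ B → w 0 ≠ w L) ∧ (L + 1 ≤ B → Sep K (w 0) (w L)) := by
  intro L
  induction L using Nat.strong_induction_on with
  | _ L IH =>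
  intro hL2 w hw
  rcases eq_or_lt_of_le hL2 with hL | hL
  · rw [← hL]
    exact ⟨fun _ => (hw.2 0 (by omega)).1, fun _ => hw.2 0 (by omega)⟩
  · have hL3 : 3 ≤ L := hL
    have hwsub : NRW K (L - 1) w :=
      ⟨fun i hi => hw.1 i (by omega), fun i hi => hw.2 i (by omega)⟩
    have hvsub : NRW K (L - 1) (fun j => w (j + 1)) := by
      constructor
      · intro i hi
        show Adj K (w (i + 1)) (w (i + 1 + 1))
        exact hw.1 (i + 1) (by omega)
      · intro i hi
        show Sep K (w (i + 1)) (w (i + 2 + 1))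
        have := hw.2 (i + 1) (by omega)
        rwa [show i + 1 + 2 = i + 2 + 1 from by omega] at this
    have hIHw := IH (L - 1) (by omega) (by omega) w hwsub
    have hIHv := IH (L - 1) (by omega) (by omega) _ hvsub
    have hne : L ≤ B → w 0 ≠ w L := by
      intro hLB heq
      have hsep0 : Sep K (w 0) (w (L - 1)) := by
        have := hIHw.2 (by omega)
        rwa [] at this
      have ha := hw.1 (L - 1) (by omega)
      rw [show L - 1 + 1 = L from by omega, ← heq] at ha
      exact (Sep.symm' hsep0).2 ha.2
    refine ⟨hne, ?_⟩
    intro hLB1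
    by_contra hns
    have hne' : w 0 ≠ w L := hne (by omega) 
    have hA : Adj K (w 0) (w L) := by
      by_contra hA
      exact hns (sep_of_not_adj hne' hA)
    refine hcl (L + 1) (by omega) (by omega) (fun j => w (j % (L + 1))) ⟨?_, ?_, ?_⟩
    · intro j
      show w ((j + (L + 1)) % (L + 1)) = w (j % (L + 1))
      rw [Nat.add_mod_right]
    · intro j
      have hmlt := Nat.mod_lt j (show 0 < L + 1 from by omega)
      show Adj K (w (j % (L + 1))) (w ((j + 1) % (L + 1)))
      have h1 := succ_mod_eq (L + 1) (by omega) j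
      by_cases hc : j % (L + 1) + 1 = L + 1
      · rw [h1, if_pos hc, show j % (L + 1) = L from by omega]
        exact Adj.symm' hA
      · rw [h1, if_neg hc]
        exact hw.1 (j % (L + 1)) (by omega)
    · intro j
      have hmlt := Nat.mod_lt j (show 0 < L + 1 from by omega)
      show Sep K (w (j % (L + 1))) (w ((j + 2) % (L + 1)))
      have h1 := succ_mod_eq (L + 1) (by omega) j
      have h2 := succ_mod_eq (L + 1) (by omega) (j + 1)
      rw [show j + 1 + 1 = j + 2 from rfl] at h2
      by_cases hc1 : j % (L + 1) + 1 = L + 1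
      · rw [h1, if_pos hc1] at h2
        rw [if_neg (by omega : ¬ ((0 : ℕ) + 1 = L + 1))] at h2
        rw [h2, show j % (L + 1) = L from by omega]
        have hs : Sep K (w (0 + 1)) (w (L - 1 + 1)) := hIHv.2 (by omega)
        rw [show L - 1 + 1 = L from by omega] at hs
        exact Sep.symm' hs
      · rw [h1, if_neg hc1] at h2
        by_cases hc2 : j % (L + 1) + 1 + 1 = L + 1
        · rw [if_pos hc2] at h2
          rw [h2, show j % (L + 1) = L - 1 from by omega]
          have hs : Sep K (w 0) (w (L - 1)) := hIHw.2 (by omega)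
          exact Sep.symm' hs
        · rw [if_neg hc2] at h2
          rw [h2]
          exact hw.2 (j % (L + 1)) (by omega)

lemma theta (K : SC V) (B : ℕ)
    (hcl : ∀ L', 3 ≤ L' → L' ≤ B → ∀ w : ℕ → V, ¬ CNR K L' w)
    (s t : ℕ) (hs : 1 ≤ s) (ht : 1 ≤ t) (hst : s + t ≤ B)
    (P Q : ℕ → V) (hP : NRW K s P) (hQ : NRW K t Q)
    (h0 : P 0 = Q 0) (hend : P s = Q t)
    (h1 : P 1 ≠ Q 1) (h1f : ({P 1, Q 1} : Finset V) ∉ K.faces) : False := by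
  classical
  have hW : NRW K (s + t) (fun j => if j ≤ s then P (s - j) else Q (j - s)) := by
    constructor
    · intro i hi
      by_cases hc1 : i < s
      · simp only [if_pos (by omega : i ≤ s), if_pos (by omega : i + 1 ≤ s)]
        have := hP.1 (s - (i + 1)) (by omega)
        rw [show s - (i + 1) + 1 = s - i from by omega] at this
        exact Adj.symm' this
      · by_cases hc2 : i = s
        · simp only [if_pos (by omega : i ≤ s), if_neg (by omega : ¬ (i + 1 ≤ s))]
          rw [show s - i = 0 from by omega, show i + 1 - s = 1 from by omega, h0]
          exact hQ.1 0 (by omega)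
        · simp only [if_neg (by omega : ¬ (i ≤ s)), if_neg (by omega : ¬ (i + 1 ≤ s))]
          have := hQ.1 (i - s) (by omega)
          rwa [show i - s + 1 = i + 1 - s from by omega] at this
    · intro i hi
      by_cases hc1 : i + 2 ≤ s
      · simp only [if_pos (by omega : i ≤ s), if_pos hc1]
        have := hP.2 (s - (i + 2)) (by omega)
        rw [show s - (i + 2) + 2 = s - i from by omega] at this
        exact Sep.symm' this
      · by_cases hc2 : i + 1 = s
        · simp only [if_pos (by omega : i ≤ s), if_neg (by omega : ¬ (i + 2 ≤ s))]
          rw [show s - i = 1 from by omega, show i + 2 - s = 1 from by omega]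
          exact ⟨h1, h1f⟩
        · by_cases hc3 : i = s
          · simp only [if_pos (by omega : i ≤ s), if_neg (by omega : ¬ (i + 2 ≤ s))]
            rw [show s - i = 0 from by omega, show i + 2 - s = 2 from by omega, h0]
            exact hQ.2 0 (by omega)
          · simp only [if_neg (by omega : ¬ (i ≤ s)), if_neg (by omega : ¬ (i + 2 ≤ s))]
            have := hQ.2 (i - s) (by omega)
            rwa [show i - s + 2 = i + 2 - s from by omega] at this
  have hne := (nrw_ends K B hcl (s + t) (by omega) _ hW).1 hst
  simp only [if_pos (by omega : (0 : ℕ) ≤ s), if_neg (by omega : ¬ (s + t ≤ s))] at hne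
  rw [Nat.sub_zero, show s + t - s = t from by omega] at hne
  exact hne hend

end SCAux

namespace SCAux

open SC

variable {V : Type*} [LinearOrder V]

lemma ncard_biUnion_le' {α β : Type*} (n : ℕ) (f : β → Set α) :
    ∀ T : Finset β, (∀ b ∈ T, (f b).Finite) → (∀ b ∈ T, (f b).ncard ≤ n) →
      (⋃ b ∈ T, f b).Finite ∧ (⋃ b ∈ T, f b).ncard ≤ T.card * n := by
  classical
  intro T
  induction T using Finset.induction_on with
  | empty => intro _ _; simp
  | insert a T hnotmem ih =>
    intro hfin hcard
    rw [Finset.set_biUnion_insert]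
    have h1 := ih (fun b hb => hfin b (Finset.mem_insert_of_mem hb))
      (fun b hb => hcard b (Finset.mem_insert_of_mem hb))
    have hfa := hfin a (Finset.mem_insert_self a T)
    constructor
    · exact Set.Finite.union hfa h1.1
    · calc (f a ∪ ⋃ b ∈ T, f b).ncard ≤ (f a).ncard + (⋃ b ∈ T, f b).ncard :=
            Set.ncard_union_le _ _
        _ ≤ n + T.card * n :=
            Nat.add_le_add (hcard a (Finset.mem_insert_self a T)) h1.2
        _ = (insert a T).card * n := by
            rw [Finset.card_insert_of_notMem hnotmem]; ring

lemma count_walks (K : SC V) (d B : ℕ)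
    (hdim : ∀ F ∈ K.faces, F.card ≤ d)
    (hclq : ∀ S : Finset V, (∀ x ∈ S, ({x} : Finset V) ∈ K.faces) →
      (∀ x ∈ S, ∀ y ∈ S, x ≠ y → ({x, y} : Finset V) ∈ K.faces) → S ∈ K.faces)
    (hcl : ∀ L', 3 ≤ L' → L' ≤ B → ∀ w : ℕ → V, ¬ CNR K L' w)
    (v : V) :
    ∀ ℓ, 1 ≤ ℓ → 2 * ℓ ≤ B → ∀ b : V,
      {w : ℕ → V | NRW K ℓ w ∧ w 0 = b ∧ ∀ j, ℓ ≤ j → w j = v}.Finite ∧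
      {w : ℕ → V | NRW K ℓ w ∧ w 0 = b ∧ ∀ j, ℓ ≤ j → w j = v}.ncard ≤ (d - 1) ^ (ℓ - 1) := by
  intro ℓ
  induction ℓ using Nat.strong_induction_on with
  | _ ℓ IH =>
  intro hℓ1 hℓB b
  classical
  set S : Set (ℕ → V) := {w : ℕ → V | NRW K ℓ w ∧ w 0 = b ∧ ∀ j, ℓ ≤ j → w j = v}
    with hSdef
  rcases eq_or_lt_of_le hℓ1 with hℓ | hℓ2
  · -- base case ℓ = 1
    have hsub : S ⊆ {fun j => if j = 0 then b else v} := by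
      intro w hw
      obtain ⟨-, hw0, hwv⟩ := hw
      simp only [Set.mem_singleton_iff]
      funext j
      by_cases hj : j = 0
      · rw [hj, if_pos rfl]; exact hw0
      · rw [if_neg hj]; exact hwv j (by omega)
    have hfin : S.Finite := Set.Finite.subset (Set.finite_singleton _) hsub
    refine ⟨hfin, ?_⟩
    rw [← hℓ]
    simpa using Set.ncard_le_ncard hsub (Set.finite_singleton _)
  · -- inductive step ℓ ≥ 2
    rcases Set.eq_empty_or_nonempty S with hS0 | ⟨w₀, hw₀⟩
    · rw [hS0]; simp
    set X : Set V := (fun w : ℕ → V => w 1) '' S with hXdef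
    have hbX : ∀ x ∈ X, Adj K b x := by
      rintro x ⟨w, hw, rfl⟩
      have := hw.1.1 0 (by omega)
      rwa [hw.2.1] at this
    have hXpair : ∀ x ∈ X, ∀ y ∈ X, x ≠ y → ({x, y} : Finset V) ∈ K.faces := by
      rintro x ⟨w, hw, rfl⟩ y ⟨w', hw', rfl⟩ hxy
      by_contra hnot
      refine theta K B hcl ℓ ℓ (by omega) (by omega) (by omega) w w' hw.1 hw'.1
        (hw.2.1.trans hw'.2.1.symm) ?_ hxy hnot
      rw [hw.2.2 ℓ le_rfl, hw'.2.2 ℓ le_rfl]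
    have hTcard : ∀ T : Finset V, ↑T ⊆ X → T.card ≤ d - 1 := by
      intro T hT
      have hbT : b ∉ T := fun hb => (hbX b (hT hb)).1 rfl
      have hmemX : ∀ x ∈ insert b T, x = b ∨ x ∈ X := by
        intro x hx
        rcases Finset.mem_insert.mp hx with h | h
        · exact Or.inl h
        · exact Or.inr (hT (Finset.mem_coe.mpr h))
      have hface : insert b T ∈ K.faces := by
        apply hclq
        · intro x hx
          rcases hmemX x hx with rfl | h
          · exact K.down_closed (hbX (w₀ 1) ⟨w₀, hw₀, rfl⟩).2
              (Finset.singleton_subset_iff.mpr (Finset.mem_insert_self _ _))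
          · exact K.down_closed (hbX x h).2
              (Finset.singleton_subset_iff.mpr
                (Finset.mem_insert_of_mem (Finset.mem_singleton_self _)))
        · intro x hx y hy hxy
          rcases hmemX x hx with rfl | hxX
          · rcases hmemX y hy with rfl | hyX
            · exact absurd rfl hxy
            · exact (hbX y hyX).2
          · rcases hmemX y hy with rfl | hyX
            · rw [Finset.pair_comm]; exact (hbX x hxX).2
            · exact hXpair x hxX y hyX hxy
      have := hdim _ hface
      rw [Finset.card_insert_of_notMem hbT] at this
      omega
    have hXfin : X.Finite := by
      by_contra hinf
      obtain ⟨T, hTX, hTc⟩ := Set.Infinite.exists_subset_card_eq hinf (d + 1)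
      have := hTcard T hTX
      omega
    -- the pieces of S according to the second vertex
    set g : V → Set (ℕ → V) := fun x => {w ∈ S | w 1 = x} with hgdef
    set f : V → Set (ℕ → V) :=
      fun x => {w : ℕ → V | NRW K (ℓ - 1) w ∧ w 0 = x ∧ ∀ j, ℓ - 1 ≤ j → w j = v}
      with hfdef
    set σ : (ℕ → V) → (ℕ → V) := fun w j => w (j + 1) with hσdef
    have hmap : ∀ x, Set.MapsTo σ (g x) (f x) := by
      rintro x w ⟨⟨hN, hw0, hwv⟩, hw1⟩
      refine ⟨⟨?_, ?_⟩, hw1, ?_⟩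
      · intro i hi
        show Adj K (w (i + 1)) (w (i + 1 + 1))
        exact hN.1 (i + 1) (by omega)
      · intro i hi
        show Sep K (w (i + 1)) (w (i + 2 + 1))
        have := hN.2 (i + 1) (by omega)
        rwa [show i + 1 + 2 = i + 2 + 1 from by omega] at this
      · intro j hj
        show w (j + 1) = v
        exact hwv (j + 1) (by omega)
    have hinj : ∀ x, Set.InjOn σ (g x) := by
      rintro x w ⟨⟨-, hw0, -⟩, -⟩ w' ⟨⟨-, hw'0, -⟩, -⟩ hσ
      funext j
      cases j with
      | zero => exact hw0.trans hw'0.symm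
      | succ i => exact congrFun hσ i
    have hIHf : ∀ x, (f x).Finite ∧ (f x).ncard ≤ (d - 1) ^ (ℓ - 2) := by
      intro x
      rw [show ℓ - 2 = ℓ - 1 - 1 from by omega]
      exact IH (ℓ - 1) (by omega) (by omega) (by omega) x
    have hgfin : ∀ x, (g x).Finite := by
      intro x
      refine Set.Finite.of_finite_image ?_ (hinj x)
      exact ((hIHf x).1).subset (Set.image_subset_iff.mpr (hmap x))
    have hgcard : ∀ x, (g x).ncard ≤ (d - 1) ^ (ℓ - 2) := fun x =>
      le_trans (Set.ncard_le_ncard_of_injOn σ (hmap x) (hinj x) (hIHf x).1) (hIHf x).2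
    have hsub : S ⊆ ⋃ x ∈ hXfin.toFinset, g x := by
      intro w hw
      have hx : w 1 ∈ X := ⟨w, hw, rfl⟩
      refine Set.mem_biUnion ?_ ⟨hw, rfl⟩
      exact hXfin.mem_toFinset.mpr hx
    obtain ⟨hUfin, hUcard⟩ := ncard_biUnion_le' ((d - 1) ^ (ℓ - 2)) g hXfin.toFinset
      (fun x _ => hgfin x) (fun x _ => hgcard x)
    refine ⟨hUfin.subset hsub, ?_⟩
    calc S.ncard ≤ (⋃ x ∈ hXfin.toFinset, g x).ncard := Set.ncard_le_ncard hsub hUfin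
      _ ≤ hXfin.toFinset.card * (d - 1) ^ (ℓ - 2) := hUcard
      _ ≤ (d - 1) * (d - 1) ^ (ℓ - 2) :=
          Nat.mul_le_mul_right _ (hTcard hXfin.toFinset (by simp))
      _ = (d - 1) ^ (ℓ - 1) := by
          rw [show ℓ - 1 = ℓ - 2 + 1 from by omega, pow_succ]
          ring

end SCAux

open SCAux

/-- If `K` is `(d-1)`-dimensional with `gr_1(K) > 2r`, then
between any two given vertices there are at most `(d-1)^(r-1)` non-returning walks
of length `r` in the directed 1-skeleton.  (A walk of length `r` from `u` to `v`
is encoded as `w : ℕ → V` with `w 0 = u`, constantly `v` from index `r` on.) -/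
theorem nrwalks_count_le {V : Type*} [LinearOrder V] (k : Type*) [Field k]
    (K : SC V) (d r : ℕ) (hr : 1 ≤ r)
    (hdim : ∀ F ∈ K.faces, F.card ≤ d) (hdim' : ∃ F ∈ K.faces, F.card = d)
    (hg : ((2 * r : ℕ) : ℕ∞) < SC.girth k K 2) (u v : V) :
    Set.ncard {w : ℕ → V | SC.IsNRWalk K r w ∧ w 0 = u ∧ ∀ j, r ≤ j → w j = v} ≤
      (d - 1) ^ (r - 1) := by
  classical
  by_cases hr2 : 2 ≤ r
  · -- main case r ≥ 2
    obtain ⟨F0, hF0, hF0card⟩ := hdim'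
    have hempty : (∅ : Finset V) ∈ K.faces := K.down_closed hF0 (Finset.empty_subset _)
    have hgirth : ∀ Wf : Finset V, Wf.card ≤ 2 * r → ∀ F ∈ K.faces,
        ¬ SC.HNonzero k ((K.link F).restrict ↑Wf) 2 := by
      intro Wf hWc F hF h
      have hmem : ((Wf.card : ℕ∞)) ∈ ((fun W : Finset V => (W.card : ℕ∞)) ''
          {W : Finset V | ∃ F ∈ K.faces, SC.HNonzero k ((K.link F).restrict ↑W) 2}) :=
        ⟨Wf, ⟨F, hF, h⟩, rfl⟩
      have hle : SC.girth k K 2 ≤ (Wf.card : ℕ∞) := sInf_le hmem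
      have h2 : SC.girth k K 2 ≤ ((2 * r : ℕ) : ℕ∞) :=
        le_trans hle (by exact_mod_cast hWc)
      exact absurd hg (not_lt_of_ge h2)
    have hgirth3 : ∀ W : Finset V, W.card = 3 → ∀ F ∈ K.faces,
        ¬ SC.HNonzero k ((K.link F).restrict ↑W) 2 :=
      fun W h3 => hgirth W (by omega)
    have hclq := clique_face k K hempty hgirth3
    have hnic := no_induced_cycle k K hempty (2 * r) hgirth
    have hcl := no_closed_nr K (2 * r) hnic
    have htriple : ∀ x y z : V, x ≠ y → y ≠ z → x ≠ z →
        ({x, y} : Finset V) ∈ K.faces → ({y, z} : Finset V) ∈ K.faces →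
        ({x, z} : Finset V) ∈ K.faces → ({x, y, z} : Finset V) ∈ K.faces := by
      intro x y z hxy hyz hxz h1 h2 h3
      apply hclq
      · intro a ha
        simp only [Finset.mem_insert, Finset.mem_singleton] at ha
        rcases ha with rfl | rfl | rfl
        · exact K.down_closed h1 (by simp)
        · exact K.down_closed h1 (by simp)
        · exact K.down_closed h2 (by simp)
      · intro a ha bb hb hab
        simp only [Finset.mem_insert, Finset.mem_singleton] at ha hb
        rcases ha with rfl | rfl | rfl <;> rcases hb with rfl | rfl | rfl <;>
          first
            | exact absurd rfl hab
            | assumption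
            | (rw [Finset.pair_comm]; assumption)
    have hconv : ∀ w : ℕ → V, SC.IsNRWalk K r w → NRW K r w := by
      intro w hw
      constructor
      · intro i hi
        exact hw.1 i hi
      · intro i hi
        refine ⟨(hw.2 i hi).1, ?_⟩
        intro hmem
        exact (hw.2 i hi).2
          (htriple (w i) (w (i + 1)) (w (i + 2)) (hw.1 i (by omega)).1
            (hw.1 (i + 1) (by omega)).1 (hw.2 i hi).1 (hw.1 i (by omega)).2
            (hw.1 (i + 1) (by omega)).2 hmem)
    obtain ⟨hfin, hcard⟩ :=
      count_walks K d (2 * r) hdim hclq hcl v r (by omega) (le_refl _) u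
    have hsub : {w : ℕ → V | SC.IsNRWalk K r w ∧ w 0 = u ∧ ∀ j, r ≤ j → w j = v} ⊆
        {w : ℕ → V | NRW K r w ∧ w 0 = u ∧ ∀ j, r ≤ j → w j = v} :=
      fun w hw => ⟨hconv w hw.1, hw.2⟩
    exact le_trans (Set.ncard_le_ncard hsub hfin) hcard
  · -- trivial case r = 1
    have hr1 : r = 1 := by omega
    subst hr1
    have hsub : {w : ℕ → V | SC.IsNRWalk K 1 w ∧ w 0 = u ∧ ∀ j, 1 ≤ j → w j = v} ⊆
        {fun j => if j = 0 then u else v} := by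
      intro w hw
      obtain ⟨-, hw0, hwv⟩ := hw
      simp only [Set.mem_singleton_iff]
      funext j
      by_cases hj : j = 0
      · rw [hj, if_pos rfl]; exact hw0
      · rw [if_neg hj]; exact hwv j (by omega)
    simpa using Set.ncard_le_ncard hsub (Set.finite_singleton _)
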